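/- A word over the alphabet {E, N, W, S} is a fighting fish if and only if it can be obtained from one of the two words EW or NS by at least one application of the operations ∇_k and △_k restricted to k ≥ 1. In particular, every fighting fish is a generalized fighting fish. -/
import Mathlib


/-- The four-letter alphabet of steps. -/
inductive Letter : Type
  | E | N | W | S
deriving DecidableEq, Repr

open Letter

/-- Fighting fish: words obtainable from `ENWS` by upper, lower and double gluings. -/
inductive IsFF : List Letter → Prop
  | base : IsFF [E, N, W, S]
  | upper (u v : List Letter) :
      IsFF (u ++ [W] ++ v) → IsFF (u ++ [N, W, S] ++ v)
  | lower (u v : List Letter) :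
      IsFF (u ++ [N] ++ v) → IsFF (u ++ [E, N, W] ++ v)
  | double (u v : List Letter) :
      IsFF (u ++ [W, N] ++ v) → IsFF (u ++ [N, W] ++ v)

/-- Generalized fighting fish: words obtainable from the empty word by the
operations `∇_k` (replace `N^k` by `E N^k W`) and `△_k` (replace `W^k` by `N W^k S`),
for `k ≥ 0`. -/
inductive IsGFF : List Letter → Prop
  | base : IsGFF []
  | nabla (u v : List Letter) (k : ℕ) :
      IsGFF (u ++ List.replicate k N ++ v) →
      IsGFF (u ++ [E] ++ List.replicate k N ++ [W] ++ v)
  | delta (u v : List Letter) (k : ℕ) :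
      IsGFF (u ++ List.replicate k W ++ v) →
      IsGFF (u ++ [N] ++ List.replicate k W ++ [S] ++ v)

/-- The latitude of a word: number of `N`'s minus number of `S`'s. -/
def lat (w : List Letter) : ℤ := (w.count N : ℤ) - (w.count S : ℤ)

/-- The longitude of a word: number of `E`'s minus number of `W`'s. -/
def long (w : List Letter) : ℤ := (w.count E : ℤ) - (w.count W : ℤ)

/-- The size of a word: half its length. -/
def size (w : List Letter) : ℕ := w.length / 2

/-- One application of an operation `∇_k` or `△_k` with `k ≥ 1`. -/
inductive PosStep : List Letter → List Letter → Prop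
  | nabla (u v : List Letter) (k : ℕ) (hk : 1 ≤ k) :
      PosStep (u ++ List.replicate k N ++ v)
        (u ++ [E] ++ List.replicate k N ++ [W] ++ v)
  | delta (u v : List Letter) (k : ℕ) (hk : 1 ≤ k) :
      PosStep (u ++ List.replicate k W ++ v)
        (u ++ [N] ++ List.replicate k W ++ [S] ++ v)


private lemma repNW_ne (k : ℕ) : ∀ t s : List Letter,
    List.replicate k N ++ [W] ≠ t ++ W :: N :: s := by
  induction k with
  | zero =>
    intro t s h
    have := congrArg List.length h
    simp at this
    omega
  | succ k ih =>
    intro t s h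
    rw [List.replicate_succ] at h
    cases t with
    | nil => simp at h
    | cons x t =>
      rw [List.cons_append] at h
      injection h with h1 h2
      exact ih t s h2

private lemma repWS_ne (k : ℕ) : ∀ t s : List Letter,
    List.replicate k W ++ [S] ≠ t ++ W :: N :: s := by
  induction k with
  | zero =>
    intro t s h
    have := congrArg List.length h
    simp at this
    omega
  | succ k ih =>
    intro t s h
    rw [List.replicate_succ] at h
    cases t with
    | nil =>
      rw [List.cons_append] at h
      injection h with h1 h2
      cases k with
      | zero => simp at h2
      | succ k => rw [List.replicate_succ] at h2; simp at h2
    | cons x t =>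
      rw [List.cons_append] at h
      injection h with h1 h2
      exact ih t s h2

private lemma repWS_ne_W (k : ℕ) : ∀ t : List Letter,
    List.replicate k W ++ [S] ≠ t ++ [W] := by
  induction k with
  | zero =>
    intro t h
    cases t with
    | nil => simp at h
    | cons x t =>
      rw [List.cons_append] at h
      injection h with h1 h2
      simp at h2
  | succ k ih =>
    intro t h
    rw [List.replicate_succ] at h
    cases t with
    | nil => simp at h
    | cons x t =>
      rw [List.cons_append] at h
      injection h with h1 h2
      exact ih t h2

private lemma posStep_congr {w w' x x' : List Letter} (h : PosStep w w')
    (h1 : w = x) (h2 : w' = x') : PosStep x x' := by subst h1; subst h2; exact h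

private lemma key {w w' : List Letter} (h : PosStep w w') (a b : List Letter)
    (heq : w' = a ++ [W, N] ++ b) :
    (∃ a' b', w = a' ++ [W, N] ++ b' ∧
      PosStep (a' ++ [N, W] ++ b') (a ++ [N, W] ++ b)) ∨
    PosStep w (a ++ [N, W] ++ b) := by
  cases h with
  | nabla u v k hk =>
    have heq' : a ++ ([W, N] ++ b)
        = u ++ (([E] ++ List.replicate k N ++ [W]) ++ v) := by
      simpa [List.append_assoc] using heq.symm
    rcases List.append_eq_append_iff.mp heq' with ⟨t, hu, hb⟩ | ⟨t, ha, hm⟩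
    · rcases t with _ | ⟨x, _ | ⟨y, t⟩⟩
      · simp at hb
      · rw [List.cons_append] at hb
        injection hb with h1 h2
        simp at h2
      · rw [List.cons_append, List.cons_append] at hb
        injection hb with h1 h2
        injection h2 with h2 h3
        subst h1; subst h2; subst hu
        have hb' : b = t ++ [E] ++ List.replicate k N ++ [W] ++ v := by
          simpa [List.append_assoc] using h3
        subst hb'
        refine Or.inl ⟨a, t ++ List.replicate k N ++ v, by simp, ?_⟩
        exact posStep_congr (PosStep.nabla (a ++ [N, W] ++ t) v k hk)
          (by simp) (by simp)
    · rcases List.append_eq_append_iff.mp hm with ⟨s, ht, hv⟩ | ⟨s, hms, hsv⟩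
      · subst ht; subst hv; subst ha
        refine Or.inl ⟨u ++ List.replicate k N ++ s, b, by simp, ?_⟩
        exact posStep_congr (PosStep.nabla u (s ++ [N, W] ++ b) k hk)
          (by simp) (by simp)
      · rcases s with _ | ⟨x, _ | ⟨y, s⟩⟩
        · have hv : v = [W, N] ++ b := by simpa using hsv.symm
          have ht : t = [E] ++ List.replicate k N ++ [W] := by simpa using hms.symm
          subst hv; subst ht; subst ha
          refine Or.inl ⟨u ++ List.replicate k N, b, by simp, ?_⟩
          exact posStep_congr (PosStep.nabla u ([N, W] ++ b) k hk)
            (by simp) (by simp)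
        · rw [List.cons_append] at hsv
          injection hsv with h1 h2
          subst h1
          have hv : v = [N] ++ b := by simpa using h2.symm
          have ht : t = [E] ++ List.replicate k N := by
            apply List.append_cancel_right (bs := [W])
            rw [← hms]
          subst hv; subst ht; subst ha
          refine Or.inr (posStep_congr (PosStep.nabla u b (k + 1) (by omega))
            (by simp [List.replicate_succ']) (by simp [List.replicate_succ']))
        · rw [List.cons_append, List.cons_append] at hsv
          injection hsv with h1 h2
          injection h2 with h2 h3
          subst h1; subst h2
          exfalso
          rcases t with _ | ⟨z, t⟩
          · simp at hms
          · rw [List.cons_append] at hms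
            injection hms with h4 h5
            exact repNW_ne k t s h5
  | delta u v k hk =>
    have heq' : a ++ ([W, N] ++ b)
        = u ++ (([N] ++ List.replicate k W ++ [S]) ++ v) := by
      simpa [List.append_assoc] using heq.symm
    rcases List.append_eq_append_iff.mp heq' with ⟨t, hu, hb⟩ | ⟨t, ha, hm⟩
    · rcases t with _ | ⟨x, _ | ⟨y, t⟩⟩
      · simp at hb
      · rw [List.cons_append] at hb
        injection hb with h1 h2
        subst h1; subst hu
        have hb' : b = List.replicate k W ++ [S] ++ v := by
          simpa [List.append_assoc] using h2
        subst hb'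
        refine Or.inr (posStep_congr (PosStep.delta a v (k + 1) (by omega))
          (by simp [List.replicate_succ]) (by simp [List.replicate_succ]))
      · rw [List.cons_append, List.cons_append] at hb
        injection hb with h1 h2
        injection h2 with h2 h3
        subst h1; subst h2; subst hu
        have hb' : b = t ++ [N] ++ List.replicate k W ++ [S] ++ v := by
          simpa [List.append_assoc] using h3
        subst hb'
        refine Or.inl ⟨a, t ++ List.replicate k W ++ v, by simp, ?_⟩
        exact posStep_congr (PosStep.delta (a ++ [N, W] ++ t) v k hk)
          (by simp) (by simp)
    · rcases List.append_eq_append_iff.mp hm with ⟨s, ht, hv⟩ | ⟨s, hms, hsv⟩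
      · subst ht; subst hv; subst ha
        refine Or.inl ⟨u ++ List.replicate k W ++ s, b, by simp, ?_⟩
        exact posStep_congr (PosStep.delta u (s ++ [N, W] ++ b) k hk)
          (by simp) (by simp)
      · rcases s with _ | ⟨x, _ | ⟨y, s⟩⟩
        · have hv : v = [W, N] ++ b := by simpa using hsv.symm
          have ht : t = [N] ++ List.replicate k W ++ [S] := by simpa using hms.symm
          subst hv; subst ht; subst ha
          refine Or.inl ⟨u ++ List.replicate k W, b, by simp, ?_⟩
          exact posStep_congr (PosStep.delta u ([N, W] ++ b) k hk)
            (by simp) (by simp)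
        · rw [List.cons_append] at hsv
          injection hsv with h1 h2
          subst h1
          exfalso
          rcases t with _ | ⟨z, t⟩
          · simp at hms
          · rw [List.cons_append] at hms
            injection hms with h4 h5
            exact repWS_ne_W k t (by simpa using h5)
        · rw [List.cons_append, List.cons_append] at hsv
          injection hsv with h1 h2
          injection h2 with h2 h3
          subst h1; subst h2
          exfalso
          rcases t with _ | ⟨z, t⟩
          · simp at hms
          · rw [List.cons_append] at hms
            injection hms with h4 h5
            exact repWS_ne k t s h5


private def SS (w : List Letter) : Prop :=
  Relation.TransGen PosStep [E, W] w ∨ Relation.TransGen PosStep [N, S] w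

private lemma SS.tail' {w w' : List Letter} (h : SS w) (h' : PosStep w w') : SS w' :=
  h.imp (fun h0 => h0.tail h') (fun h0 => h0.tail h')

private lemma transGen_swap {w₀ w : List Letter} (h : Relation.TransGen PosStep w₀ w)
    (h0 : ∀ a b : List Letter, w₀ ≠ a ++ [W, N] ++ b) :
    ∀ a b : List Letter, w = a ++ [W, N] ++ b →
      Relation.TransGen PosStep w₀ (a ++ [N, W] ++ b) := by
  induction h with
  | single hs =>
    intro a b hab
    rcases key hs a b hab with ⟨a', b', hw, hstep⟩ | hstep
    · exact absurd hw (h0 a' b')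
    · exact Relation.TransGen.single hstep
  | tail hwx hs ih =>
    intro a b hab
    rcases key hs a b hab with ⟨a', b', hw, hstep⟩ | hstep
    · exact (ih a' b' hw).tail hstep
    · exact hwx.tail hstep

private lemma noWN_EW : ∀ a b : List Letter, [E, W] ≠ a ++ [W, N] ++ b := by
  intro a b h
  rcases a with _ | ⟨x, _ | ⟨y, a⟩⟩ <;> simp_all

private lemma noWN_NS : ∀ a b : List Letter, [N, S] ≠ a ++ [W, N] ++ b := by
  intro a b h
  rcases a with _ | ⟨x, _ | ⟨y, a⟩⟩ <;> simp_all

private lemma ss_swap {w : List Letter} (h : SS w) (a b : List Letter)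
    (hw : w = a ++ [W, N] ++ b) : SS (a ++ [N, W] ++ b) :=
  h.imp (fun h' => transGen_swap h' noWN_EW a b hw)
    (fun h' => transGen_swap h' noWN_NS a b hw)

private lemma isFF_to_SS {w : List Letter} (h : IsFF w) : SS w := by
  induction h with
  | base =>
    exact Or.inr (Relation.TransGen.single
      (posStep_congr (PosStep.nabla [] [S] 1 le_rfl) (by simp) (by simp)))
  | upper u v _ ih =>
    exact ih.tail' (posStep_congr (PosStep.delta u v 1 le_rfl) (by simp) (by simp))
  | lower u v _ ih =>
    exact ih.tail' (posStep_congr (PosStep.nabla u v 1 le_rfl) (by simp) (by simp))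
  | double u v _ ih =>
    exact ss_swap ih u v rfl

private lemma isFF_congr {w w' : List Letter} (h : IsFF w) (e : w = w') : IsFF w' :=
  e ▸ h

private lemma ff_moveW (j : ℕ) : ∀ u v : List Letter,
    IsFF (u ++ [W] ++ List.replicate j N ++ v) →
    IsFF (u ++ List.replicate j N ++ [W] ++ v) := by
  induction j with
  | zero => intro u v h; simpa using h
  | succ j ih =>
    intro u v h
    have h1 : IsFF (u ++ [N, W] ++ (List.replicate j N ++ v)) :=
      IsFF.double u _ (isFF_congr h (by simp [List.replicate_succ]))
    have h2 := ih (u ++ [N]) v (isFF_congr h1 (by simp))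
    exact isFF_congr h2 (by simp [List.replicate_succ])

private lemma ff_moveN (j : ℕ) : ∀ u v : List Letter,
    IsFF (u ++ List.replicate j W ++ [N] ++ v) →
    IsFF (u ++ [N] ++ List.replicate j W ++ v) := by
  induction j with
  | zero => intro u v h; simpa using h
  | succ j ih =>
    intro u v h
    have h1 := ih (u ++ [W]) v (isFF_congr h (by simp [List.replicate_succ]))
    have h2 : IsFF (u ++ [N, W] ++ (List.replicate j W ++ v)) :=
      IsFF.double u _ (isFF_congr h1 (by simp))
    exact isFF_congr h2 (by simp [List.replicate_succ])

private lemma isFF_nabla {u v : List Letter} {k : ℕ} (hk : 1 ≤ k)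
    (h : IsFF (u ++ List.replicate k N ++ v)) :
    IsFF (u ++ [E] ++ List.replicate k N ++ [W] ++ v) := by
  obtain ⟨j, rfl⟩ : ∃ j, k = j + 1 := ⟨k - 1, by omega⟩
  have h1 : IsFF (u ++ [E, N, W] ++ (List.replicate j N ++ v)) :=
    IsFF.lower u _ (isFF_congr h (by simp [List.replicate_succ]))
  have h2 := ff_moveW j (u ++ [E, N]) v (isFF_congr h1 (by simp))
  exact isFF_congr h2 (by simp [List.replicate_succ])

private lemma isFF_delta {u v : List Letter} {k : ℕ} (hk : 1 ≤ k)
    (h : IsFF (u ++ List.replicate k W ++ v)) :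
    IsFF (u ++ [N] ++ List.replicate k W ++ [S] ++ v) := by
  obtain ⟨j, rfl⟩ : ∃ j, k = j + 1 := ⟨k - 1, by omega⟩
  have h1 : IsFF ((u ++ List.replicate j W) ++ [N, W, S] ++ v) :=
    IsFF.upper _ v (isFF_congr h (by simp [List.replicate_succ']))
  have h2 := ff_moveN j u ([W, S] ++ v) (isFF_congr h1 (by simp))
  exact isFF_congr h2 (by simp [List.replicate_succ'])

private lemma posStep_isFF {w w' : List Letter} (h : PosStep w w') (hw : IsFF w) :
    IsFF w' := by
  cases h with
  | nabla u v k hk => exact isFF_nabla hk hw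
  | delta u v k hk => exact isFF_delta hk hw

private lemma step_EW {x : List Letter} {w : List Letter} (h : PosStep w x)
    (hw : w = [E, W]) : x = [E, N, W, S] := by
  cases h with
  | nabla u v k hk =>
    exfalso
    rcases u with _ | ⟨a, _ | ⟨a', u⟩⟩ <;>
      cases k <;> simp_all [List.replicate_succ]
  | delta u v k hk =>
    rcases u with _ | ⟨a, _ | ⟨a', u⟩⟩ <;>
      cases k <;> simp_all [List.replicate_succ]

private lemma step_NS {x : List Letter} {w : List Letter} (h : PosStep w x)
    (hw : w = [N, S]) : x = [E, N, W, S] := by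
  cases h with
  | nabla u v k hk =>
    rcases u with _ | ⟨a, _ | ⟨a', u⟩⟩
    · cases k with
      | zero => exact absurd hk (by omega)
      | succ k =>
        cases k with
        | zero => simp_all [List.replicate_succ]
        | succ k => simp_all [List.replicate_succ]
    · cases k <;> simp_all [List.replicate_succ]
    · cases k <;> simp_all [List.replicate_succ]
  | delta u v k hk =>
    exfalso
    rcases u with _ | ⟨a, _ | ⟨a', u⟩⟩ <;>
      cases k <;> simp_all [List.replicate_succ]

private lemma ss_isFF {w : List Letter} (h : SS w) : IsFF w := by
  rcases h with h | h
  · induction h with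
    | single hs => rw [step_EW hs rfl]; exact IsFF.base
    | tail _ hs ih => exact posStep_isFF hs ih
  · induction h with
    | single hs => rw [step_NS hs rfl]; exact IsFF.base
    | tail _ hs ih => exact posStep_isFF hs ih

private lemma isGFF_congr {w w' : List Letter} (h : IsGFF w) (e : w = w') : IsGFF w' :=
  e ▸ h

private lemma posStep_isGFF {w w' : List Letter} (h : PosStep w w') (hw : IsGFF w) :
    IsGFF w' := by
  cases h with
  | nabla u v k hk => exact IsGFF.nabla u v k hw
  | delta u v k hk => exact IsGFF.delta u v k hw

private lemma ss_isGFF {w : List Letter} (h : SS w) : IsGFF w := by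
  have hEW : IsGFF [E, W] :=
    isGFF_congr (IsGFF.nabla [] [] 0 IsGFF.base) (by simp)
  have hNS : IsGFF [N, S] :=
    isGFF_congr (IsGFF.delta [] [] 0 IsGFF.base) (by simp)
  rcases h with h | h
  · induction h with
    | single hs => exact posStep_isGFF hs hEW
    | tail _ hs ih => exact posStep_isGFF hs ih
  · induction h with
    | single hs => exact posStep_isGFF hs hNS
    | tail _ hs ih => exact posStep_isGFF hs ih

/-- A word is a fighting fish iff it can be obtained from `EW` or from `NS` by at
least one application of the operations `∇_k`, `△_k` with `k ≥ 1`; in particular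
every fighting fish is a generalized fighting fish. -/
theorem fightingFish_iff_posSteps :
    (∀ w : List Letter, IsFF w ↔
      (Relation.TransGen PosStep [E, W] w ∨ Relation.TransGen PosStep [N, S] w)) ∧
    (∀ w : List Letter, IsFF w → IsGFF w) := by
  refine ⟨fun w => ⟨fun h => isFF_to_SS h, fun h => ss_isFF h⟩,
    fun w h => ss_isGFF (isFF_to_SS h)⟩
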